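/- In the braid group B_3, the word σ1 σ2 σ2 σ1 σ1 σ2 σ2 σ1 σ1 σ2⁻¹ σ2⁻¹ σ2⁻¹ (a braid representative of the knot 12n749) equals the product of the positive bands of its band decomposition with band centers {1, 2, 4, 5, 8, 9}, namely σ1 · σ2 · (σ2 σ1 σ2⁻¹) · (σ2 σ1 σ2⁻¹) · (σ2³ σ1 σ2⁻³) · (σ2³ σ1 σ2⁻³); in particular, this braid is quasipositive. -/

import Mathlib

/-- The Artin relations for the braid group with `m` generators
`σ_1, …, σ_m` (indexed by `Fin m`), i.e. the braid group `B_{m+1}`: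
`σ_i σ_j = σ_j σ_i` for `|i - j| ≥ 2`, and
`σ_i σ_{i+1} σ_i = σ_{i+1} σ_i σ_{i+1}`. -/
def braidRels (m : ℕ) : Set (FreeGroup (Fin m)) :=
  { r | (∃ i j : Fin m, (i : ℕ) + 2 ≤ (j : ℕ) ∧
          r = FreeGroup.of i * FreeGroup.of j * (FreeGroup.of i)⁻¹ * (FreeGroup.of j)⁻¹) ∨
        (∃ i j : Fin m, (i : ℕ) + 1 = (j : ℕ) ∧
          r = FreeGroup.of i * FreeGroup.of j * FreeGroup.of i *
              (FreeGroup.of j)⁻¹ * (FreeGroup.of i)⁻¹ * (FreeGroup.of j)⁻¹) }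

/-- The braid group `B_{m+1}`, presented with `m` Artin generators.
Here index `i : Fin m` corresponds to the Artin generator `σ_{i+1}`. -/
abbrev BraidGrp (m : ℕ) := PresentedGroup (braidRels m)

/-- The Artin generator `σ_{i+1}` of the braid group `B_{m+1}`. -/
def σ {m : ℕ} (i : Fin m) : BraidGrp m := PresentedGroup.of i

/-- A letter of a braid word: a generator index together with a sign
(`true` = the positive generator, `false` = its inverse). -/
abbrev Letter (m : ℕ) := Fin m × Bool

/-- The group element represented by a letter. -/
def letterEl {m : ℕ} (x : Letter m) : BraidGrp m :=
  if x.2 then σ x.1 else (σ x.1)⁻¹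

/-- The group element represented by a braid word. -/
def wordProd {m : ℕ} (w : List (Letter m)) : BraidGrp m :=
  (w.map letterEl).prod

/-- The band of the band decomposition of the word `w` with band centers `S`
(1-based positions) at center `p`: namely `α_p * x_p * α_p⁻¹`, where `x_p` is
the letter of `w` at position `p` and `α_p` is the product, in increasing
order of position, of the letters of `w` at positions `q < p` with `q ∉ S`. -/
def band {m : ℕ} (w : List (Letter m)) (S : List ℕ) (p : ℕ) : BraidGrp m :=
  let α : BraidGrp m :=
    wordProd (((w.zipIdx.map Prod.swap).filter fun qx => decide (qx.1 + 1 < p ∧ qx.1 + 1 ∉ S)).map Prod.snd)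
  match w[p - 1]? with
  | some x => α * letterEl x * α⁻¹
  | none => 1

/-- The product, in increasing order of band center, of the bands of the
band decomposition of the word `w` with band centers `S`. -/
def bandProd {m : ℕ} (w : List (Letter m)) (S : List ℕ) : BraidGrp m :=
  (S.map (band w S)).prod

/-- A positive band in the braid group: a conjugate `α σ_j α⁻¹` of a generator. -/
def IsPositiveBand {m : ℕ} (x : BraidGrp m) : Prop :=
  ∃ (α : BraidGrp m) (j : Fin m), x = α * σ j * α⁻¹

/-- A braid is quasipositive if it is a product of positive bands. -/
def IsQuasipositive {m : ℕ} (x : BraidGrp m) : Prop :=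
  ∃ l : List (BraidGrp m), (∀ b ∈ l, IsPositiveBand b) ∧ x = l.prod

/-- A negative band in the braid group: a conjugate `α σ_j⁻¹ α⁻¹` of the
inverse of a generator. -/
def IsNegativeBand {m : ℕ} (x : BraidGrp m) : Prop :=
  ∃ (α : BraidGrp m) (j : Fin m), x = α * (σ j)⁻¹ * α⁻¹

/-- A braid is quasinegative if it is a product of negative bands. -/
def IsQuasinegative {m : ℕ} (x : BraidGrp m) : Prop :=
  ∃ l : List (BraidGrp m), (∀ b ∈ l, IsNegativeBand b) ∧ x = l.prod

/-- The braid word for the knot `12n749` (letter `(i, true)` is `σ_(i+1)`,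
`(i, false)` is `σ_(i+1)⁻¹`). -/
def theWord : List (Letter 2) :=
  [(0, true), (1, true), (1, true), (0, true), (0, true), (1, true), (1, true), (0, true), (0, true), (1, false), (1, false), (1, false)]

/-- The band centers. -/
def theCenters : List ℕ := [1, 2, 4, 5, 8, 9]

/-- The braid representative of `12n749` equals the product of the bands of its
band decomposition with the given band centers; in particular it is quasipositive. -/
theorem knot_12n749_quasipositive :
    wordProd theWord = bandProd theWord theCenters ∧
      bandProd theWord theCenters =
        σ 0 * σ 1 * (σ 1 * σ 0 * (σ 1)⁻¹) * (σ 1 * σ 0 * (σ 1)⁻¹) * ((σ 1) ^ 3 * σ 0 * ((σ 1) ^ 3)⁻¹) * ((σ 1) ^ 3 * σ 0 * ((σ 1) ^ 3)⁻¹) ∧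
      IsQuasipositive (wordProd theWord) := by
  refine ⟨?_, ?_, ?_⟩
  · simp only [wordProd, bandProd, band, theWord, theCenters, letterEl, List.zipIdx_cons,
      List.zipIdx_nil, List.filter, List.map, List.prod_cons, List.prod_nil]
    simp [letterEl]
    group
  · simp only [wordProd, bandProd, band, theWord, theCenters, letterEl, List.zipIdx_cons,
      List.zipIdx_nil, List.filter, List.map, List.prod_cons, List.prod_nil]
    simp [letterEl]
    group
    rw [zpow_two]
    simp [mul_assoc]
  · refine ⟨[σ 0, σ 1, σ 1 * σ 0 * (σ 1)⁻¹, σ 1 * σ 0 * (σ 1)⁻¹,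
      (σ 1) ^ 3 * σ 0 * ((σ 1) ^ 3)⁻¹, (σ 1) ^ 3 * σ 0 * ((σ 1) ^ 3)⁻¹], ?_, ?_⟩
    · intro b hb
      simp only [List.mem_cons, List.not_mem_nil, or_false] at hb
      rcases hb with h|h|h|h|h|h <;> subst h
      · exact ⟨1, 0, by group⟩
      · exact ⟨1, 1, by group⟩
      · exact ⟨σ 1, 0, rfl⟩
      · exact ⟨σ 1, 0, rfl⟩
      · exact ⟨(σ 1) ^ 3, 0, rfl⟩
      · exact ⟨(σ 1) ^ 3, 0, rfl⟩
    · simp only [wordProd, theWord, letterEl, List.map, List.prod_cons, List.prod_nil]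
      simp
      group
      rw [zpow_two]
      simp [mul_assoc]
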